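/- Let ρ > 0 and let M be a real symmetric p×p matrix with eigendecomposition M = D Λ Dᵀ, where D is orthogonal and Λ is diagonal. Then the matrix T = (1/(2ρ)) · D ( Λ + (Λ² + 4ρ I)^{1/2} ) Dᵀ, where (Λ² + 4ρ I)^{1/2} is the diagonal matrix with entries √(λ_j² + 4ρ) for the diagonal entries λ_j of Λ, is symmetric positive definite and satisfies ρ T − T⁻¹ = M. Moreover, T is the unique symmetric positive definite p×p matrix satisfying ρ T − T⁻¹ = M. -/

import Mathlib

open Matrix

set_option linter.unusedSectionVars false
set_option maxHeartbeats 1000000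

section Aux
variable {n : Type*} [Fintype n] [DecidableEq n]

lemma aux_psd_trace_nonneg {A : Matrix n n ℝ} (hA : A.PosSemidef) : 0 ≤ A.trace := by
  rw [Matrix.trace]
  refine Finset.sum_nonneg fun i _ => ?_
  have := hA.dotProduct_mulVec_nonneg (Pi.single i 1)
  simpa using this

lemma aux_trace_mul_nonneg {A B : Matrix n n ℝ} (hA : A.PosSemidef) (hB : B.PosSemidef) :
    0 ≤ (A * B).trace := by
  obtain ⟨C, rfl⟩ := (by open scoped MatrixOrder in exact CStarAlgebra.nonneg_iff_eq_star_mul_self.mp hA.nonneg :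
    ∃ C : Matrix n n ℝ, A = star C * C)
  rw [Matrix.mul_assoc, Matrix.trace_mul_comm]
  exact aux_psd_trace_nonneg ((hB.mul_mul_conjTranspose_same C))

lemma aux_frobenius_eq {A : Matrix n n ℝ} : (Aᵀ * A).trace = ∑ j, ∑ i, (A i j)^2 := by
  simp [Matrix.trace, Matrix.mul_apply, sq, Matrix.diag]

lemma aux_frobenius_zero {A : Matrix n n ℝ} (h : (Aᵀ * A).trace = 0) : A = 0 := by
  rw [aux_frobenius_eq] at h
  ext i j
  have h1 := (Finset.sum_eq_zero_iff_of_nonneg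
    (fun j _ => Finset.sum_nonneg fun i _ => sq_nonneg (A i j))).mp h j (Finset.mem_univ j)
  have h2 := (Finset.sum_eq_zero_iff_of_nonneg
    (fun i _ => sq_nonneg (A i j))).mp h1 i (Finset.mem_univ i)
  simpa using pow_eq_zero_iff two_ne_zero |>.mp h2

lemma aux_conj_posDef {D A : Matrix n n ℝ}
    (hD' : D * Dᵀ = 1) (hA : A.PosDef) : (D * A * Dᵀ).PosDef := by
  refine Matrix.PosDef.of_dotProduct_mulVec_pos ?_ ?_
  · have hAt : Aᵀ = A := by
      rw [← conjTranspose_eq_transpose_of_trivial]; exact hA.1.eq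
    show (D * A * Dᵀ)ᴴ = _
    simp [conjTranspose_eq_transpose_of_trivial, transpose_mul, hAt, Matrix.mul_assoc]
  · intro x hx
    have hy : Dᵀ *ᵥ x ≠ 0 := by
      intro h
      apply hx
      have : (D * Dᵀ) *ᵥ x = 0 := by rw [← Matrix.mulVec_mulVec, h, Matrix.mulVec_zero]
      rwa [hD', Matrix.one_mulVec] at this
    have := hA.dotProduct_mulVec_pos hy
    simpa [Matrix.dotProduct_mulVec, Matrix.vecMul_transpose, ← Matrix.mulVec_mulVec,
      Matrix.mulVec_transpose] using this

/-- Uniqueness: two positive definite solutions of `ρT − T⁻¹ = M` agree. -/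
lemma aux_unique {ρ : ℝ} (hρ : 0 < ρ) {T₁ T₂ : Matrix n n ℝ}
    (h₁ : T₁.PosDef) (h₂ : T₂.PosDef)
    (heq : ρ • T₁ - T₁⁻¹ = ρ • T₂ - T₂⁻¹) : T₁ = T₂ := by
  have hd1 : IsUnit T₁.det := (Matrix.isUnit_iff_isUnit_det _).mp h₁.isUnit
  have hd2 : IsUnit T₂.det := (Matrix.isUnit_iff_isUnit_det _).mp h₂.isUnit
  set Δ := T₁ - T₂ with hΔ
  have hΔH : Δ.IsHermitian := h₁.1.sub h₂.1
  have hΔt : Δᵀ = Δ := by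
    rw [← conjTranspose_eq_transpose_of_trivial]; exact hΔH.eq
  have hρΔ : ρ • Δ = T₁⁻¹ - T₂⁻¹ := by
    have h := sub_eq_sub_iff_sub_eq_sub.mp heq
    rw [hΔ, smul_sub]
    exact h
  have hkey : ρ • (T₁ * Δ * T₂) = -Δ := by
    have h1 : T₁ * (ρ • Δ) * T₂ = T₂ - T₁ := by
      rw [hρΔ, Matrix.mul_sub, Matrix.sub_mul, Matrix.mul_nonsing_inv _ hd1,
        Matrix.one_mul, Matrix.mul_assoc, Matrix.nonsing_inv_mul _ hd2, Matrix.mul_one]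
    calc ρ • (T₁ * Δ * T₂) = T₁ * (ρ • Δ) * T₂ := by
          rw [mul_smul_comm, smul_mul_assoc]
      _ = T₂ - T₁ := h1
      _ = -Δ := by rw [hΔ, neg_sub]
  have hkey2 : ρ • (Δ * T₁ * Δ * T₂) = -(Δᵀ * Δ) := by
    have h := congrArg (fun X => Δ * X) hkey
    simp only [mul_smul_comm, Matrix.mul_neg] at h
    rw [hΔt]
    simp only [Matrix.mul_assoc] at h ⊢
    exact h
  have t_nonneg : 0 ≤ (Δ * T₁ * Δ * T₂).trace := by
    have hPSD : (Δ * T₁ * Δ).PosSemidef := by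
      have := h₁.posSemidef.mul_mul_conjTranspose_same Δ
      rwa [conjTranspose_eq_transpose_of_trivial, hΔt] at this
    exact aux_trace_mul_nonneg hPSD h₂.posSemidef
  have fr_nonneg : 0 ≤ (Δᵀ * Δ).trace := by
    have := aux_psd_trace_nonneg (Matrix.posSemidef_conjTranspose_mul_self Δ)
    rwa [conjTranspose_eq_transpose_of_trivial] at this
  have htr : ρ * (Δ * T₁ * Δ * T₂).trace = -(Δᵀ * Δ).trace := by
    have := congrArg Matrix.trace hkey2
    simpa [Matrix.trace_smul] using this
  have hzero : (Δᵀ * Δ).trace = 0 := by nlinarith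
  have : Δ = 0 := aux_frobenius_zero hzero
  have := sub_eq_zero.mp (hΔ ▸ this)
  exact this

end Aux

/-- **Closed-form solution of the matrix equation `ρT − T⁻¹ = M`** (the
`T`-update of the ADMM iteration). Given an eigendecomposition `M = D Λ Dᵀ`,
the matrix `T = (1/(2ρ)) D (Λ + √(Λ² + 4ρI)) Dᵀ` is the unique symmetric
positive definite solution of `ρT − T⁻¹ = M`. -/
theorem admm_T_update (p : ℕ) (ρ : ℝ) (hρ : 0 < ρ)
    (M : Matrix (Fin p) (Fin p) ℝ) (hM : M.IsHermitian)
    (D L : Matrix (Fin p) (Fin p) ℝ)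
    (hD : Dᵀ * D = 1) (hD' : D * Dᵀ = 1) (hL : L.IsDiag)
    (hdecomp : M = D * L * Dᵀ)
    (T : Matrix (Fin p) (Fin p) ℝ)
    (hT : T = (1 / (2 * ρ)) •
      (D * (L + Matrix.of fun i j =>
        if i = j then Real.sqrt ((L i i) ^ 2 + 4 * ρ) else 0) * Dᵀ)) :
    T.PosDef ∧ ρ • T - T⁻¹ = M ∧
      ∀ T' : Matrix (Fin p) (Fin p) ℝ, T'.PosDef → ρ • T' - T'⁻¹ = M → T' = T := by
  set r : Fin p → ℝ := fun i => Real.sqrt ((L i i) ^ 2 + 4 * ρ) with hr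
  set d : Fin p → ℝ := fun i => (L i i + r i) / (2 * ρ) with hd
  have hr2 : ∀ i, (r i) ^ 2 = (L i i) ^ 2 + 4 * ρ := fun i =>
    Real.sq_sqrt (by positivity)
  have hrnn : ∀ i, 0 ≤ r i := fun i => Real.sqrt_nonneg _
  have hsum : ∀ i, 0 < L i i + r i := by
    intro i
    nlinarith [hr2 i, hrnn i, sq_nonneg (L i i + r i)]
  have hdpos : ∀ i, 0 < d i := fun i => div_pos (hsum i) (by linarith)
  -- T = D * diagonal d * Dᵀ
  have hTeq : T = D * Matrix.diagonal d * Dᵀ := by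
    rw [hT]
    have hLQ : L + (Matrix.of fun i j =>
        if i = j then Real.sqrt ((L i i) ^ 2 + 4 * ρ) else 0) =
        Matrix.diagonal (fun i => L i i + r i) := by
      ext i j
      by_cases h : i = j
      · subst h; simp [Matrix.diagonal, hr]
      · simp [Matrix.diagonal, h, hL h]
    rw [hLQ, ← smul_mul_assoc, ← mul_smul_comm, ← Matrix.diagonal_smul]
    have he : ((1 / (2 * ρ)) • fun i => L i i + r i) = d := by
      funext i
      simp only [Pi.smul_apply, smul_eq_mul, hd]
      ring
    rw [he]
  -- scalar identity
  have hkey : ∀ i, (d i)⁻¹ = ρ * d i - L i i := by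
    intro i
    have hdi : d i = (L i i + r i) / (2 * ρ) := rfl
    refine inv_eq_of_mul_eq_one_right ?_
    rw [hdi]
    have h2ρ : (2 * ρ) ≠ 0 := by positivity
    field_simp
    linear_combination hr2 i
  have hdiagPD : (Matrix.diagonal d).PosDef := Matrix.PosDef.diagonal hdpos
  have hTPD : T.PosDef := hTeq ▸ aux_conj_posDef hD' hdiagPD
  have hTinv : T⁻¹ = D * Matrix.diagonal (fun i => (d i)⁻¹) * Dᵀ := by
    apply Matrix.inv_eq_right_inv
    rw [hTeq]
    simp only [Matrix.mul_assoc]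
    rw [← Matrix.mul_assoc Dᵀ D, hD, Matrix.one_mul,
      ← Matrix.mul_assoc (Matrix.diagonal d), Matrix.diagonal_mul_diagonal]
    rw [show (fun i => d i * (d i)⁻¹) = fun _ => (1 : ℝ) from
      funext fun i => mul_inv_cancel₀ (hdpos i).ne', Matrix.diagonal_one, Matrix.one_mul, hD']
  have hsolve : ρ • T - T⁻¹ = M := by
    rw [hTinv, hTeq, hdecomp]
    have h1 : ρ • (D * Matrix.diagonal d * Dᵀ) = D * Matrix.diagonal (fun i => ρ * d i) * Dᵀ := by
      rw [← smul_mul_assoc, ← mul_smul_comm, ← Matrix.diagonal_smul]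
      rfl
    have h2 : (fun i => ρ * d i - (d i)⁻¹) = fun i => L i i := by
      funext i
      rw [hkey i]; ring
    rw [h1, ← Matrix.sub_mul, ← Matrix.mul_sub, Matrix.diagonal_sub]
    have h3 : Matrix.diagonal (fun i => ρ * d i - (d i)⁻¹) = L := by
      rw [h2]; exact hL.diagonal_diag
    rw [h3]
  refine ⟨hTPD, hsolve, fun T' hPD' hEq' => aux_unique hρ hPD' hTPD (hEq'.trans hsolve.symm)⟩
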